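/- Let H be a complex Hilbert space, let B and T be bounded linear operators on H, and let 0 < α ≤ 1. Then |BT|^α ≤ ‖B‖^α · |T|^α in the Loewner order on bounded self-adjoint operators, where |X| denotes the positive square root of X*X and the power α is taken via the continuous functional calculus of the positive operator. -/

import Mathlib

/- STATEMENT 3: For bounded operators B, T on a complex Hilbert space H and 0 < α ≤ 1,
|BT|^α ≤ ‖B‖^α · |T|^α in the Loewner order, where |X| = (X*X)^{1/2} and powers are
taken via the continuous functional calculus. -/

open scoped NNReal ENNReal
open CFC Filter Topology

noncomputable section
set_option maxHeartbeats 1000000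

section AuxHeinz

variable {A : Type*} [CStarAlgebra A] [PartialOrder A] [StarOrderedRing A]

lemma my_specrad_comm (x y : A) : spectralRadius ℂ (x * y) = spectralRadius ℂ (y * x) := by
  have h : ∀ p q : A, spectralRadius ℂ (p * q) ≤ spectralRadius ℂ (q * p) := by
    intro p q
    rw [spectralRadius, spectralRadius]
    refine iSup₂_le fun k hk => ?_
    rcases eq_or_ne k 0 with rfl | h0
    · simp
    · have hk' : k ∈ spectrum ℂ (q * p) := by
        have : k ∈ spectrum ℂ (p * q) \ {0} := ⟨hk, h0⟩
        rw [spectrum.nonzero_mul_comm] at this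
        exact this.1
      exact le_iSup₂ (f := fun k (_ : k ∈ spectrum ℂ (q * p)) => (‖k‖₊ : ℝ≥0∞)) k hk'
  exact le_antisymm (h x y) (h y x)

lemma my_rpow_add (a : A) {x y : ℝ} (hx : 0 < x) (hy : 0 < y) :
    a ^ (x + y) = a ^ x * a ^ y := by
  have h1 : (fun t : ℝ≥0 => t ^ (x + y)) = fun t : ℝ≥0 => t ^ x * t ^ y := by
    ext t
    rcases eq_or_ne t 0 with rfl | ht
    · simp [NNReal.zero_rpow, (by positivity : x + y ≠ 0), hx.ne', hy.ne']
    · exact_mod_cast NNReal.rpow_add ht x y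
  rw [CFC.rpow_def, CFC.rpow_def, CFC.rpow_def, h1,
    cfc_mul _ _ a ((NNReal.continuous_rpow_const hx.le).continuousOn)
      ((NNReal.continuous_rpow_const hy.le).continuousOn)]

lemma my_sqrt_rpow (a : A) {γ : ℝ} (hγ : 0 < γ) : sqrt (a ^ γ) = a ^ (γ / 2) := by
  have h : γ = ((γ.toNNReal : ℝ≥0) : ℝ) := (Real.coe_toNNReal γ hγ.le).symm
  rw [h, sqrt_rpow_nnreal]

lemma my_isUnit_rpow {b : A} (hb : 0 ≤ b) (hbs : 0 ∉ spectrum ℝ≥0 b) (γ : ℝ) :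
    IsUnit (b ^ γ) :=
  ⟨⟨b ^ γ, b ^ (-γ), rpow_mul_rpow_neg γ ((spectrum.isUnit_of_zero_notMem ℝ≥0 hbs).isStrictlyPositive hb), rpow_neg_mul_rpow γ ((spectrum.isUnit_of_zero_notMem ℝ≥0 hbs).isStrictlyPositive hb)⟩, rfl⟩

lemma my_rpow_rpow_half {b : A} (hb : 0 ≤ b) (hbs : 0 ∉ spectrum ℝ≥0 b) {γ : ℝ} (hγ : 0 < γ) :
    (b ^ γ) ^ (-(1 / 2) : ℝ) = b ^ (-(γ / 2)) := by
  rw [rpow_rpow b γ (-(1/2)) hγ.ne' ((spectrum.isUnit_of_zero_notMem ℝ≥0 hbs).isStrictlyPositive hb)]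
  congr 1
  ring

lemma my_norm_le_one {a b : A} (ha : 0 ≤ a) (hb : 0 ≤ b) (hbs : 0 ∉ spectrum ℝ≥0 b)
    {γ : ℝ} (hγ : 0 < γ) (h : a ^ γ ≤ b ^ γ) :
    ‖a ^ (γ / 2) * b ^ (-(γ / 2))‖ ≤ 1 := by
  have key := (le_iff_norm_sqrt_mul_rpow (a ^ γ) (b ^ γ)
    (rpow_nonneg (a := a) (y := γ)) ((my_isUnit_rpow hb hbs γ).isStrictlyPositive (rpow_nonneg (a := b) (y := γ)))).mp h
  rwa [my_sqrt_rpow a hγ, my_rpow_rpow_half hb hbs hγ] at key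

lemma my_interp {a b : A} (ha : 0 ≤ a) (hb : 0 ≤ b) (hbs : 0 ∉ spectrum ℝ≥0 b)
    {α β : ℝ} (hα : 0 < α) (hβ : 0 ≤ β)
    (hA : ‖a ^ (α / 2) * b ^ (-(α / 2))‖ ≤ 1)
    (hB : ‖a ^ (β / 2) * b ^ (-(β / 2))‖ ≤ 1) :
    a ^ ((α + β) / 2) ≤ b ^ ((α + β) / 2) := by
  rcases subsingleton_or_nontrivial A with hS | hN
  · exact le_of_eq (Subsingleton.elim _ _)
  set γ : ℝ := (α + β) / 2 with hγdef
  have hγ : 0 < γ := by positivity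
  rw [le_iff_norm_sqrt_mul_rpow (a ^ γ) (b ^ γ)
    (rpow_nonneg (a := a) (y := γ)) ((my_isUnit_rpow hb hbs γ).isStrictlyPositive (rpow_nonneg (a := b) (y := γ))),
    my_sqrt_rpow a hγ, my_rpow_rpow_half hb hbs hγ]
  set u : A := a ^ (γ / 2) * b ^ (-(γ / 2)) with hudef
  have hsa : ∀ (c : A) (x : ℝ), star (c ^ x) = c ^ x := fun c x =>
    (IsSelfAdjoint.of_nonneg (rpow_nonneg (a := c) (y := x)))
  have hmul : a ^ (γ / 2) * a ^ (γ / 2) = a ^ γ := by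
    rw [← my_rpow_add a (half_pos hγ) (half_pos hγ)]
    norm_num
  have hbmul : b ^ (-(γ / 2)) * b ^ (-(γ / 2)) = b ^ (-γ) := by
    rw [← rpow_add (spectrum.isUnit_of_zero_notMem ℝ≥0 hbs)]
    congr 1
    ring
  have hsu : star u * u = b ^ (-(γ / 2)) * (a ^ γ * b ^ (-(γ / 2))) := by
    rw [hudef, star_mul, hsa, hsa, ← hmul]
    noncomm_ring
  -- decomposition of a ^ γ
  have hadec : a ^ γ = a ^ (β / 2) * a ^ (α / 2) := by
    rcases eq_or_lt_of_le hβ with rfl | hβ'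
    · rw [show (0:ℝ)/2 = (0:ℝ) from by norm_num, CFC.rpow_zero a ha, one_mul]
      congr 1
      rw [hγdef]
      ring
    · rw [← my_rpow_add a (half_pos hβ') (half_pos hα)]
      congr 1
      ring
  have hbdec : b ^ (-γ) = b ^ (-(α / 2)) * b ^ (-(β / 2)) := by
    rw [← rpow_add (spectrum.isUnit_of_zero_notMem ℝ≥0 hbs)]
    congr 1
    ring
  -- spectral radius chain
  have hX : ‖a ^ (α / 2) * b ^ (-(α / 2))‖₊ ≤ 1 := by
    rwa [← NNReal.coe_le_coe, coe_nnnorm, NNReal.coe_one]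
  have hY : ‖b ^ (-(β / 2)) * a ^ (β / 2)‖₊ ≤ 1 := by
    have : b ^ (-(β / 2)) * a ^ (β / 2) = star (a ^ (β / 2) * b ^ (-(β / 2))) := by
      rw [star_mul, hsa, hsa]
    rw [this, nnnorm_star]
    rwa [← NNReal.coe_le_coe, coe_nnnorm, NNReal.coe_one]
  have hr : (‖star u * u‖₊ : ℝ≥0∞) ≤ 1 := by
    have hsu_sa : IsSelfAdjoint (star u * u) := IsSelfAdjoint.of_nonneg (star_mul_self_nonneg u)
    rw [← hsu_sa.spectralRadius_eq_nnnorm, hsu]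
    calc spectralRadius ℂ (b ^ (-(γ / 2)) * (a ^ γ * b ^ (-(γ / 2))))
        = spectralRadius ℂ ((a ^ γ * b ^ (-(γ / 2))) * b ^ (-(γ / 2))) := my_specrad_comm _ _
      _ = spectralRadius ℂ (a ^ γ * b ^ (-γ)) := by rw [mul_assoc, hbmul]
      _ = spectralRadius ℂ (a ^ (β / 2) * ((a ^ (α / 2) * b ^ (-(α / 2))) * b ^ (-(β / 2)))) := by
          rw [hadec, hbdec]; noncomm_ring
      _ = spectralRadius ℂ (((a ^ (α / 2) * b ^ (-(α / 2))) * b ^ (-(β / 2))) * a ^ (β / 2)) :=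
          my_specrad_comm _ _
      _ = spectralRadius ℂ ((a ^ (α / 2) * b ^ (-(α / 2))) * (b ^ (-(β / 2)) * a ^ (β / 2))) := by
          rw [mul_assoc]
      _ ≤ ‖(a ^ (α / 2) * b ^ (-(α / 2))) * (b ^ (-(β / 2)) * a ^ (β / 2))‖₊ :=
          spectrum.spectralRadius_le_nnnorm _
      _ ≤ (‖a ^ (α / 2) * b ^ (-(α / 2))‖₊ * ‖b ^ (-(β / 2)) * a ^ (β / 2)‖₊ : ℝ≥0) := by
          exact_mod_cast ENNReal.coe_le_coe.mpr (nnnorm_mul_le _ _)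
      _ ≤ 1 := by exact_mod_cast mul_le_one' hX hY
  have hr' : ‖star u * u‖ ≤ 1 := by
    have := (ENNReal.coe_le_one_iff).mp hr
    rwa [← NNReal.coe_le_coe, coe_nnnorm, NNReal.coe_one] at this
  rw [CStarRing.norm_star_mul_self] at hr'
  nlinarith [norm_nonneg u]

lemma my_dyadic {a b : A} (ha : 0 ≤ a) (hb : 0 ≤ b) (hbs : 0 ∉ spectrum ℝ≥0 b) (hab : a ≤ b) :
    ∀ n k : ℕ, 0 < k → k ≤ 2 ^ n → a ^ ((k : ℝ) / 2 ^ n) ≤ b ^ ((k : ℝ) / 2 ^ n) := by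
  rcases subsingleton_or_nontrivial A with hS | hN
  · exact fun n k _ _ => le_of_eq (Subsingleton.elim _ _)
  intro n
  induction n with
  | zero =>
    intro k hk1 hk2
    interval_cases k
    · simpa [CFC.rpow_one a ha, CFC.rpow_one b hb] using hab
  | succ n ih =>
    intro k hk1 hk2
    have h2 : (2:ℕ) ^ (n+1) = 2 * 2 ^ n := by ring
    rcases Nat.even_or_odd k with ⟨m, hm⟩ | ⟨m, hm⟩
    · -- k = 2m
      have hm1 : 0 < m := by omega
      have hm2 : m ≤ 2 ^ n := by omega
      have : ((k : ℝ) / 2 ^ (n+1)) = (m : ℝ) / 2 ^ n := by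
        subst hm; push_cast; ring
      rw [this]
      exact ih m hm1 hm2
    · -- k = 2m + 1
      have hm2 : m + 1 ≤ 2 ^ n := by
        rcases Nat.lt_or_ge (m+1) (2^n + 1) with h | h
        · omega
        · exfalso; omega
      set α : ℝ := ((m:ℝ) + 1) / 2 ^ n with hαdef
      set β : ℝ := (m:ℝ) / 2 ^ n with hβdef
      have hα : 0 < α := by positivity
      have hβ : 0 ≤ β := by positivity
      have hA' : a ^ α ≤ b ^ α := by
        have := ih (m+1) (by omega) hm2
        simpa [hαdef] using this
      have hAnorm : ‖a ^ (α / 2) * b ^ (-(α / 2))‖ ≤ 1 :=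
        my_norm_le_one ha hb hbs hα hA'
      have hBnorm : ‖a ^ (β / 2) * b ^ (-(β / 2))‖ ≤ 1 := by
        rcases Nat.eq_zero_or_pos m with rfl | hm0
        · have hβ0 : β = 0 := by simp [hβdef]
          rw [hβ0]
          simp only [zero_div, neg_zero]
          rw [CFC.rpow_zero a ha, CFC.rpow_zero b hb, one_mul, norm_one]
        · have hβ' : 0 < β := by positivity
          exact my_norm_le_one ha hb hbs hβ' (ih m hm0 (by omega))
      have hkey := my_interp ha hb hbs hα hβ hAnorm hBnorm
      have hexp : (α + β) / 2 = (k : ℝ) / 2 ^ (n+1) := by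
        subst hm; rw [hαdef, hβdef]; push_cast; field_simp; ring
      rwa [hexp] at hkey

lemma my_rpow_eq_cfc_real {c : A} (hc : 0 ≤ c) (p : ℝ) :
    c ^ p = cfc (fun x : ℝ => x ^ p) c := by
  rw [CFC.rpow_def, cfc_nnreal_eq_real _ _ hc]
  apply cfc_congr
  intro x hx
  have hx0 : 0 ≤ x := spectrum_nonneg_of_nonneg hc hx
  simp only [NNReal.coe_rpow, Real.coe_toNNReal x hx0]

lemma my_tendsto_rpow {c : A} (hc : 0 ≤ c) {α : ℝ} (hα0 : 0 < α) (hα1 : α ≤ 1) {q : ℕ → ℝ}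
    (hq : Tendsto q atTop (𝓝 α)) (hq1 : ∀ n, α ≤ q n) (hq2 : ∀ n, q n ≤ 1) :
    Tendsto (fun n => c ^ q n) atTop (𝓝 (c ^ α)) := by
  rcases subsingleton_or_nontrivial A with hS | hN
  · have : ∀ n, c ^ q n = c ^ α := fun n => Subsingleton.elim _ _
    simpa [this] using tendsto_const_nhds (x := c ^ α) (f := atTop (α := ℕ))
  rw [Metric.tendsto_atTop]
  intro ε hε
  set U : Set ℝ := Set.Icc α 1 with hUdef
  set K : Set ℝ := Set.Icc 0 ‖c‖ with hKdef
  have hUK : IsCompact (U ×ˢ K) := (isCompact_Icc).prod (isCompact_Icc)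
  set F : ℝ → ℝ → ℝ := fun p x => x ^ p with hFdef
  have hcont : ContinuousOn (Function.uncurry F) (U ×ˢ K) := by
    intro z hz
    have : ContinuousAt (Function.uncurry F) z := by
      have h1 : ContinuousAt (fun p : ℝ × ℝ => p.1 ^ p.2) (z.2, z.1) :=
        Real.continuousAt_rpow (z.2, z.1) (Or.inr (lt_of_lt_of_le hα0 hz.1.1))
      have h2 : ContinuousAt (Prod.swap : ℝ × ℝ → ℝ × ℝ) z := continuous_swap.continuousAt
      have h3 := ContinuousAt.comp (f := Prod.swap) h1 h2
      exact h3
    exact this.continuousWithinAt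
  have huc : UniformContinuousOn (Function.uncurry F) (U ×ˢ K) :=
    hUK.uniformContinuousOn_of_continuous hcont
  have hTU : TendstoUniformlyOn F (F α) (𝓝[U] α) K :=
    huc.tendstoUniformlyOn ⟨le_refl α, hα1⟩
  have hqU : Tendsto q atTop (𝓝[U] α) := by
    rw [tendsto_nhdsWithin_iff]
    exact ⟨hq, Eventually.of_forall fun n => ⟨hq1 n, hq2 n⟩⟩
  have hev : ∀ᶠ n in atTop, ∀ x ∈ K, dist (F α x) (F (q n) x) < ε / 2 :=
    hqU.eventually (Metric.tendstoUniformlyOn_iff.mp hTU (ε / 2) (half_pos hε))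
  rw [eventually_atTop] at hev
  obtain ⟨N, hN⟩ := hev
  refine ⟨N, fun n hn => ?_⟩
  have hbound : ∀ x ∈ spectrum ℝ c, ‖x ^ (q n) - x ^ α‖ ≤ ε / 2 := by
    intro x hx
    have hx0 : 0 ≤ x := spectrum_nonneg_of_nonneg hc hx
    have hxK : x ∈ K := ⟨hx0, by simpa [Real.norm_of_nonneg hx0] using spectrum.norm_le_norm_of_mem hx⟩
    have := hN n hn x hxK
    rw [Real.dist_eq] at this
    rw [Real.norm_eq_abs, abs_sub_comm]
    exact le_of_lt this
  have heq : c ^ q n - c ^ α = cfc (fun x : ℝ => x ^ (q n) - x ^ α) c := by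
    rw [my_rpow_eq_cfc_real hc (q n), my_rpow_eq_cfc_real hc α,
      cfc_sub _ _ c ((Real.continuous_rpow_const (le_trans hα0.le (hq1 n))).continuousOn)
        ((Real.continuous_rpow_const hα0.le).continuousOn)]
  rw [dist_eq_norm, heq]
  calc ‖cfc (fun x : ℝ => x ^ (q n) - x ^ α) c‖ ≤ ε / 2 := norm_cfc_le (by positivity) hbound
    _ < ε := by linarith

lemma my_LH_unit {a b : A} (ha : 0 ≤ a) (hb : 0 ≤ b) (hbs : 0 ∉ spectrum ℝ≥0 b) (hab : a ≤ b)
    {α : ℝ} (hα0 : 0 < α) (hα1 : α ≤ 1) : a ^ α ≤ b ^ α := by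
  set q : ℕ → ℝ := fun n => (⌈α * 2 ^ n⌉₊ : ℝ) / 2 ^ n with hqdef
  have hq1 : ∀ n, α ≤ q n := by
    intro n
    rw [hqdef, le_div_iff₀ (by positivity)]
    exact Nat.le_ceil _
  have hq2 : ∀ n, q n ≤ 1 := by
    intro n
    rw [hqdef, div_le_one (by positivity)]
    have h1 : ⌈α * 2 ^ n⌉₊ ≤ 2 ^ n := by
      apply Nat.ceil_le.mpr
      push_cast
      nlinarith [pow_pos (show (0:ℝ) < 2 from by norm_num) n]
    exact_mod_cast h1
  have hqk : ∀ n, a ^ q n ≤ b ^ q n := by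
    intro n
    have hk1 : 0 < ⌈α * 2 ^ n⌉₊ := Nat.ceil_pos.mpr (by positivity)
    have hk2 : ⌈α * 2 ^ n⌉₊ ≤ 2 ^ n := by
      apply Nat.ceil_le.mpr
      push_cast
      nlinarith [pow_pos (show (0:ℝ) < 2 by norm_num) n]
    have := my_dyadic ha hb hbs hab n _ hk1 hk2
    simpa [hqdef] using this
  have hq : Tendsto q atTop (𝓝 α) := by
    have hup : ∀ n, q n ≤ α + (1/2) ^ n := by
      intro n
      rw [hqdef, div_le_iff₀ (by positivity)]
      have := Nat.ceil_lt_add_one (by positivity : (0:ℝ) ≤ α * 2 ^ n)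
      calc (⌈α * 2 ^ n⌉₊ : ℝ) ≤ α * 2 ^ n + 1 := this.le
        _ = (α + (1/2)^n) * 2 ^ n := by
          rw [add_mul, ← mul_pow, show (1/2:ℝ) * 2 = 1 by norm_num, one_pow]
    have h1 : Tendsto (fun n : ℕ => α + (1/2:ℝ) ^ n) atTop (𝓝 (α + 0)) :=
      tendsto_const_nhds.add (tendsto_pow_atTop_nhds_zero_of_lt_one (by norm_num) (by norm_num))
    rw [add_zero] at h1
    exact tendsto_of_tendsto_of_tendsto_of_le_of_le tendsto_const_nhds h1 hq1 hup
  -- pass to the limit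
  have hta := my_tendsto_rpow ha hα0 hα1 hq hq1 hq2
  have htb := my_tendsto_rpow hb hα0 hα1 hq hq1 hq2
  have hcl : IsClosed {x : A | 0 ≤ x} := CStarAlgebra.isClosed_nonneg
  have hmem : b ^ α - a ^ α ∈ {x : A | 0 ≤ x} := by
    apply hcl.mem_of_tendsto (htb.sub hta)
    exact Eventually.of_forall fun n => sub_nonneg.mpr (hqk n)
  exact sub_nonneg.mp hmem

lemma my_LH {a b : A} (ha : 0 ≤ a) (hab : a ≤ b)
    {α : ℝ} (hα0 : 0 < α) (hα1 : α ≤ 1) : a ^ α ≤ b ^ α := by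
  have hb : 0 ≤ b := ha.trans hab
  have halg : ∀ r : ℝ, 0 ≤ r → 0 ≤ algebraMap ℝ A r := by
    intro r hr
    have h1 : algebraMap ℝ A r
        = star (algebraMap ℝ A (Real.sqrt r)) * algebraMap ℝ A (Real.sqrt r) := by
      have hstar : star (algebraMap ℝ A (Real.sqrt r)) = algebraMap ℝ A (Real.sqrt r) := by
        rw [← algebraMap_star_comm, star_trivial]
      rw [hstar, ← map_mul, Real.mul_self_sqrt hr]
    rw [h1]
    exact star_mul_self_nonneg _
  set bn : ℕ → A := fun n => b + algebraMap ℝ A (1 / (n + 1)) with hbndef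
  have hεpos : ∀ n : ℕ, (0:ℝ) < 1 / (n + 1) := fun n => by positivity
  have hbn_nonneg : ∀ n, 0 ≤ bn n := fun n =>
    add_nonneg hb (halg _ (hεpos n).le)
  have hbn_unit : ∀ n, IsUnit (bn n) := by
    intro n
    apply CStarAlgebra.isUnit_of_le (algebraMap ℝ A (1 / (n + 1))) ?_
      (((isUnit_iff_ne_zero.mpr (hεpos n).ne').map (algebraMap ℝ A)).isStrictlyPositive (halg _ (hεpos n).le))
    exact le_add_of_nonneg_left hb
  have hbn_spec : ∀ n, 0 ∉ spectrum ℝ≥0 (bn n) := fun n =>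
    spectrum.zero_notMem ℝ≥0 (hbn_unit n)
  have hstep : ∀ n, a ^ α ≤ (bn n) ^ α := by
    intro n
    apply my_LH_unit ha (hbn_nonneg n) (hbn_spec n) _ hα0 hα1
    exact hab.trans (le_add_of_nonneg_right (halg _ (hεpos n).le))
  -- bn n ^ α tends to b ^ α
  have hbn_eq : ∀ n, (bn n) ^ α = cfc (fun x : ℝ => (x + 1 / (n + 1)) ^ α) b := by
    intro n
    rw [my_rpow_eq_cfc_real (hbn_nonneg n) α]
    have hb_eq : bn n = cfc (fun x : ℝ => x + 1 / (n + 1)) b := by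
      have h1 : cfc (fun x : ℝ => x + 1 / (n + 1)) b
          = cfc (fun x : ℝ => x) b + cfc (fun _ : ℝ => (1 / (n + 1 : ℝ))) b :=
        cfc_add (a := b) (fun x : ℝ => x) (fun _ => (1 / (n + 1 : ℝ))) (by fun_prop) (by fun_prop)
      rw [h1, cfc_id' ℝ b, cfc_const _ b]
    rw [hb_eq, ← cfc_comp' (fun x : ℝ => x ^ α) (fun x : ℝ => x + 1 / (n + 1)) b
      ((Real.continuous_rpow_const hα0.le).continuousOn) (by fun_prop)]
  have hdiff : ∀ n, ‖(bn n) ^ α - b ^ α‖ ≤ (1 / (n + 1 : ℝ)) ^ α := by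
    intro n
    rcases subsingleton_or_nontrivial A with hS | hN
    · have : (bn n) ^ α - b ^ α = 0 := Subsingleton.elim _ _
      rw [this, norm_zero]
      positivity
    rw [hbn_eq n, my_rpow_eq_cfc_real hb α,
      ← cfc_sub _ _ b (by
          exact ((Real.continuous_rpow_const hα0.le).comp (by fun_prop)).continuousOn)
        ((Real.continuous_rpow_const hα0.le).continuousOn)]
    apply norm_cfc_le (by positivity)
    intro x hx
    have hx0 : 0 ≤ x := spectrum_nonneg_of_nonneg hb hx
    have hmono : x ^ α ≤ (x + 1 / (n + 1)) ^ α :=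
      Real.rpow_le_rpow hx0 (le_add_of_nonneg_right (hεpos n).le) hα0.le
    have hsub : (x + 1 / (n + 1)) ^ α ≤ x ^ α + (1 / (n + 1 : ℝ)) ^ α := by
      have := NNReal.rpow_add_le_add_rpow (x.toNNReal) ((1 / (n + 1 : ℝ)).toNNReal) hα0.le hα1
      have h1 : ((x.toNNReal + (1 / (n + 1 : ℝ)).toNNReal : ℝ≥0) : ℝ) = x + 1 / (n + 1) := by
        push_cast
        rw [Real.coe_toNNReal _ hx0, Real.coe_toNNReal _ (hεpos n).le]
      calc (x + 1 / (n + 1)) ^ α = (((x.toNNReal + (1 / (n + 1 : ℝ)).toNNReal : ℝ≥0) : ℝ)) ^ α := by rw [h1]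
        _ = (((x.toNNReal + (1 / (n + 1 : ℝ)).toNNReal) ^ α : ℝ≥0) : ℝ) := by
            rw [← NNReal.coe_rpow]
        _ ≤ ((x.toNNReal ^ α + (1 / (n + 1 : ℝ)).toNNReal ^ α : ℝ≥0) : ℝ) := by
            exact_mod_cast this
        _ = x ^ α + (1 / (n + 1 : ℝ)) ^ α := by
            rw [NNReal.coe_add, NNReal.coe_rpow, NNReal.coe_rpow,
              Real.coe_toNNReal _ hx0, Real.coe_toNNReal _ (hεpos n).le]
    rw [Real.norm_eq_abs, _root_.abs_of_nonneg (by linarith)]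
    linarith
  have hz : Tendsto (fun n : ℕ => (1 / (n + 1 : ℝ)) ^ α) atTop (𝓝 0) := by
    have h0 : Tendsto (fun n : ℕ => 1 / (n + 1 : ℝ)) atTop (𝓝 0) :=
      tendsto_one_div_add_atTop_nhds_zero_nat
    have hc : ContinuousAt (fun y : ℝ => y ^ α) 0 :=
      (Real.continuous_rpow_const hα0.le).continuousAt
    have h2 := hc.tendsto.comp h0
    simpa [Function.comp_def, Real.zero_rpow hα0.ne'] using h2
  have htend : Tendsto (fun n => (bn n) ^ α) atTop (𝓝 (b ^ α)) := by
    rw [tendsto_iff_norm_sub_tendsto_zero]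
    exact squeeze_zero (fun n => norm_nonneg _) hdiff hz
  have hmem : b ^ α - a ^ α ∈ {x : A | 0 ≤ x} := by
    apply CStarAlgebra.isClosed_nonneg.mem_of_tendsto (htend.sub tendsto_const_nhds)
    exact Eventually.of_forall fun n => sub_nonneg.mpr (hstep n)
  exact sub_nonneg.mp hmem

lemma my_smul_rpow (r : ℝ≥0) {t : A} (ht : 0 ≤ t) {p : ℝ} (hp : 0 ≤ p) :
    (r • t) ^ p = (r ^ p : ℝ≥0) • t ^ p := by
  rw [CFC.rpow_def, ← cfc_const_mul_id r t ht,
    ← cfc_comp' (fun x : ℝ≥0 => x ^ p) (fun x : ℝ≥0 => r * x) t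
      ((NNReal.continuous_rpow_const hp).continuousOn) (by fun_prop)]
  have h1 : (fun x : ℝ≥0 => (r * x) ^ p) = fun x : ℝ≥0 => r ^ p * x ^ p := by
    ext x; exact_mod_cast NNReal.mul_rpow
  rw [h1, cfc_const_mul (r ^ p) (fun x : ℝ≥0 => x ^ p) t
    ((NNReal.continuous_rpow_const hp).continuousOn), CFC.rpow_def]


end AuxHeinz

theorem abs_comp_rpow_le
    {H : Type*} [NormedAddCommGroup H] [InnerProductSpace ℂ H] [CompleteSpace H]
    (B T : H →L[ℂ] H) (α : ℝ) (hα0 : 0 < α) (hα1 : α ≤ 1) :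
    cfc (fun x : ℝ => x ^ α) (CFC.sqrt (star (B * T) * (B * T))) ≤
      ‖B‖ ^ α • cfc (fun x : ℝ => x ^ α) (CFC.sqrt (star T * T)) := by
  set s : H →L[ℂ] H := star (B * T) * (B * T) with hsdef
  set t : H →L[ℂ] H := star T * T with htdef
  have hs : 0 ≤ s := star_mul_self_nonneg _
  have ht : 0 ≤ t := star_mul_self_nonneg _
  -- identify LHS and RHS cfc's with rpow
  have hcoe : ((α.toNNReal : ℝ≥0) : ℝ) = α := Real.coe_toNNReal α hα0.le
  have hL : cfc (fun x : ℝ => x ^ α) (CFC.sqrt s) = s ^ (α / 2) := by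
    rw [← my_rpow_eq_cfc_real (sqrt_nonneg (a := s)) α, ← hcoe, rpow_sqrt_nnreal hs, hcoe]
  have hR : cfc (fun x : ℝ => x ^ α) (CFC.sqrt t) = t ^ (α / 2) := by
    rw [← my_rpow_eq_cfc_real (sqrt_nonneg (a := t)) α, ← hcoe, rpow_sqrt_nnreal ht, hcoe]
  rw [hL, hR]
  -- key operator inequality s ≤ ‖B‖² • t
  have hle : s ≤ (‖B‖₊ ^ 2 : ℝ≥0) • t := by
    have hBB : star B * B ≤ algebraMap ℝ (H →L[ℂ] H) (‖B‖ ^ 2) :=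
      CStarAlgebra.star_mul_le_algebraMap_norm_sq
    have hconj := star_left_conjugate_le_conjugate hBB T
    have e1 : star T * (star B * B) * T = s := by
      rw [hsdef, star_mul]
      noncomm_ring
    have e2 : star T * algebraMap ℝ (H →L[ℂ] H) (‖B‖ ^ 2) * T = (‖B‖₊ ^ 2 : ℝ≥0) • t := by
      rw [mul_assoc, ← Algebra.smul_def, mul_smul_comm, NNReal.smul_def]
      push_cast
      ring_nf
      rfl
    rw [← e1, ← e2]
    exact hconj
  have h3 : s ^ (α / 2) ≤ ((‖B‖₊ ^ 2 : ℝ≥0) • t) ^ (α / 2) :=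
    my_LH hs hle (by positivity) (by linarith)
  have h4 : ((‖B‖₊ ^ 2 : ℝ≥0) • t) ^ (α / 2) = ‖B‖ ^ α • t ^ (α / 2) := by
    rw [my_smul_rpow (‖B‖₊ ^ 2) ht (by positivity : (0:ℝ) ≤ α / 2)]
    have hsc : ((‖B‖₊ ^ 2 : ℝ≥0) ^ (α / 2 : ℝ) : ℝ≥0) = ‖B‖₊ ^ α := by
      rw [← NNReal.rpow_natCast ‖B‖₊ 2, ← NNReal.rpow_mul]
      congr 1
      push_cast
      ring
    rw [hsc, NNReal.smul_def, NNReal.coe_rpow, coe_nnnorm]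
  rw [← h4]
  exact h3

end
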